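/- For every t ∈ [0,1], the function x ↦ 1 !_t x is an extreme point of the convex set S = { f : [0,∞) → [0,∞) : f is operator monotone and f(1) = 1 }, viewed as a subset of the real vector space of functions from [0,∞) to ℝ. -/

import Mathlib

open MeasureTheory Real ComplexOrder

/-- The `t`-weighted harmonic mean `1 !_t x` of `1` and `x`, for `t ∈ [0,1]`, `x ∈ [0,∞)`. -/
noncomputable def whm (t x : ℝ) : ℝ :=
  if t = 0 ∧ x = 0 then 1 else x / ((1 - t) * x + t)

/-- `f` is operator monotone on `[0,∞)`: for all `n` and all positive semidefinite complex
`n × n` matrices `A ≤ B` (Loewner order), `f(A) ≤ f(B)` via the continuous functional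
calculus. -/
def OperatorMonotone (f : ℝ → ℝ) : Prop :=
  ∀ (n : ℕ) (A B : Matrix (Fin n) (Fin n) ℂ),
    A.PosSemidef → B.PosSemidef → (B - A).PosSemidef →
    (cfc f B - cfc f A).PosSemidef

/-- Extension of a function `f : [0,∞) → ℝ` to all of `ℝ` (by junk value `0` on negatives);
this is the function applied to positive semidefinite matrices via the continuous
functional calculus. -/
noncomputable def ext (f : Set.Ici (0 : ℝ) → ℝ) : ℝ → ℝ :=
  fun x => if h : 0 ≤ x then f ⟨x, Set.mem_Ici.mpr h⟩ else 0

/-- The convex set of normalized operator monotone functions from `[0,∞)` to `[0,∞)`,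
inside the real vector space of functions from `[0,∞)` to `ℝ`. -/
def S : Set (Set.Ici (0 : ℝ) → ℝ) :=
  {f | (∀ x, 0 ≤ f x) ∧ OperatorMonotone (ext f) ∧ f ⟨1, Set.mem_Ici.mpr zero_le_one⟩ = 1}


set_option linter.unusedSectionVars false
set_option linter.unnecessarySeqFocus false
set_option linter.unusedVariables false
set_option linter.unreachableTactic false
set_option linter.unusedTactic false
set_option maxHeartbeats 1000000

namespace StmtAux

open Matrix Polynomial

variable {n : Type*} [Fintype n] [DecidableEq n]

lemma whm_zero_t {y : ℝ} (hy : 0 < y) : whm 0 y = 1 := by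
  have hcond : ¬((0:ℝ) = 0 ∧ y = 0) := by simp [hy.ne']
  rw [whm, if_neg hcond]
  norm_num
  exact hy.ne'

lemma psd_real_smul {M : Matrix n n ℂ} {c : ℝ} (hc : 0 ≤ c) (hM : M.PosSemidef) :
    (c • M).PosSemidef := by
  refine .of_dotProduct_mulVec_nonneg ?_ ?_
  · have h1 := hM.1
    unfold Matrix.IsHermitian at h1 ⊢
    rw [Matrix.conjTranspose_smul, h1]
    simp
  · intro x
    rw [Matrix.smul_mulVec, dotProduct_smul]
    have h0 := hM.dotProduct_mulVec_nonneg x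
    rw [Complex.real_smul]
    exact mul_nonneg (Complex.zero_le_real.mpr hc) h0

lemma quad_nonneg {p q r u v : ℝ} (hp : 0 ≤ p) (hr : 0 ≤ r) (h : q^2 ≤ p*r) :
    0 ≤ p*u^2 + 2*q*(u*v) + r*v^2 := by
  rcases eq_or_lt_of_le hp with hp0 | hp0
  · have hq : q = 0 := by nlinarith
    subst hq
    rw [← hp0]
    nlinarith [sq_nonneg v]
  · nlinarith [sq_nonneg (p*u + q*v), mul_nonneg (sub_nonneg.mpr h) (sq_nonneg v)]

lemma psd_of_2x2 {p q r : ℝ} (hp : 0 ≤ p) (hr : 0 ≤ r) (h : q^2 ≤ p*r) :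
    (!![(p:ℂ), (q:ℂ); (q:ℂ), (r:ℂ)]).PosSemidef := by
  refine .of_dotProduct_mulVec_nonneg ?_ ?_
  · ext i j
    fin_cases i <;> fin_cases j <;>
      simp [Matrix.conjTranspose_apply, Complex.conj_ofReal]
  · intro x
    have hexp : star x ⬝ᵥ ((!![(p:ℂ), (q:ℂ); (q:ℂ), (r:ℂ)]) *ᵥ x) =
        ((p * ((x 0).re^2 + (x 0).im^2) + 2*q*((x 0).re*(x 1).re + (x 0).im*(x 1).im)
          + r * ((x 1).re^2 + (x 1).im^2) : ℝ) : ℂ) := by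
      refine Complex.ext ?_ ?_ <;>
        · simp [Matrix.mulVec, dotProduct, Fin.sum_univ_two,
            Complex.add_re, Complex.add_im, Complex.mul_re, Complex.mul_im]
          simp only [← Complex.ofReal_pow, Complex.ofReal_re, Complex.ofReal_im]
          ring
    rw [hexp, Complex.zero_le_real]
    have h1 := quad_nonneg (u := (x 0).re) (v := (x 1).re) hp hr h
    have h2 := quad_nonneg (u := (x 0).im) (v := (x 1).im) hp hr h
    nlinarith

lemma psd_2x2_entries {p q r : ℝ} (h : (!![(p:ℂ), (q:ℂ); (q:ℂ), (r:ℂ)]).PosSemidef) :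
    0 ≤ p ∧ 0 ≤ r ∧ q^2 ≤ p*r := by
  have key : ∀ z y : ℝ, 0 ≤ p*y^2 + 2*q*(y*z) + r*z^2 := by
    intro z y
    have h2 := h.dotProduct_mulVec_nonneg ![(y:ℂ), (z:ℂ)]
    have hexp : star ![(y:ℂ), (z:ℂ)] ⬝ᵥ ((!![(p:ℂ), (q:ℂ); (q:ℂ), (r:ℂ)]) *ᵥ ![(y:ℂ), (z:ℂ)]) =
        ((p*y^2 + 2*q*(y*z) + r*z^2 : ℝ) : ℂ) := by
      refine Complex.ext ?_ ?_ <;>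
        · simp [Matrix.mulVec, dotProduct, Fin.sum_univ_two,
            Complex.add_re, Complex.add_im, Complex.mul_re, Complex.mul_im, Complex.conj_ofReal]
          simp only [← Complex.ofReal_pow, Complex.ofReal_re, Complex.ofReal_im]
          ring
    rw [hexp] at h2
    exact Complex.zero_le_real.mp h2
  have hp : 0 ≤ p := by have := key 0 1; nlinarith
  have hr : 0 ≤ r := by have := key 1 0; nlinarith
  refine ⟨hp, hr, ?_⟩
  have key2 : ∀ z : ℝ, 0 ≤ r * (z*z) + (2*q) * z + p := by
    intro z
    have := key z 1
    nlinarith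
  have hd := discrim_le_zero key2
  rw [discrim] at hd
  nlinarith


lemma spectrum_subset_Ici {A : Matrix n n ℂ} (hA : A.PosSemidef) :
    spectrum ℝ A ⊆ Set.Ici (0:ℝ) := by
  rw [Matrix.IsHermitian.spectrum_real_eq_range_eigenvalues hA.1]
  rintro - ⟨i, rfl⟩
  exact hA.eigenvalues_nonneg i

lemma spectrum_subset_pair {A : Matrix n n ℂ} (α β : ℝ)
    (h : (A - algebraMap ℝ _ α) * (A - algebraMap ℝ _ β) = 0) :
    spectrum ℝ A ⊆ {α, β} := by
  intro r hr
  by_contra hne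
  simp only [Set.mem_insert_iff, Set.mem_singleton_iff, not_or] at hne
  obtain ⟨hα, hβ⟩ := hne
  rw [spectrum.mem_iff] at hr
  apply hr
  have key : (algebraMap ℝ (Matrix n n ℂ) r - A) *
      (A - algebraMap ℝ (Matrix n n ℂ) (α + β - r)) = algebraMap ℝ _ ((r-α)*(r-β)) := by
    have e1 : algebraMap ℝ (Matrix n n ℂ) r - A = aeval A (C r - X) := by
      simp [map_sub, aeval_X, aeval_C]
    have e2 : A - algebraMap ℝ (Matrix n n ℂ) (α + β - r) = aeval A (X - C (α + β - r)) := by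
      simp [map_sub, aeval_X, aeval_C]
    have e3 : A - algebraMap ℝ (Matrix n n ℂ) α = aeval A (X - C α) := by
      simp [map_sub, aeval_X, aeval_C]
    have e4 : A - algebraMap ℝ (Matrix n n ℂ) β = aeval A (X - C β) := by
      simp [map_sub, aeval_X, aeval_C]
    have hpoly : (C r - X) * (X - C (α + β - r)) =
        C ((r-α)*(r-β)) - (X - C α) * (X - C β) := by
      simp only [C_mul, C_add, C_sub, C_neg, C_pow]; ring
    have h' : aeval A ((X - C α) * (X - C β)) = 0 := by
      rw [_root_.map_mul, ← e3, ← e4, h]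
    rw [e1, e2, ← _root_.map_mul, hpoly, map_sub, h', sub_zero, aeval_C]
  have hc : (r-α)*(r-β) ≠ 0 := mul_ne_zero (sub_ne_zero.mpr hα) (sub_ne_zero.mpr hβ)
  have h1 : (algebraMap ℝ (Matrix n n ℂ) r - A) * (((r-α)*(r-β))⁻¹ •
      (A - algebraMap ℝ (Matrix n n ℂ) (α + β - r))) = 1 := by
    rw [mul_smul_comm, key, Algebra.algebraMap_eq_smul_one, smul_smul, inv_mul_cancel₀ hc,
      one_smul]
  exact ⟨⟨_, _, h1, mul_eq_one_comm.mp h1⟩, rfl⟩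

lemma cfc_affine {A : Matrix n n ℂ} (hA : IsSelfAdjoint A) (c₀ c₁ : ℝ) :
    cfc (fun x : ℝ => c₀ + c₁ * x) A = algebraMap ℝ (Matrix n n ℂ) c₀ + c₁ • A := by
  rw [cfc_const_add _ _ _ (by fun_prop) hA, cfc_const_mul_id c₁ A hA]

lemma alg1x1 (x : ℝ) : algebraMap ℝ (Matrix (Fin 1) (Fin 1) ℂ) x = !![(x:ℂ)] := by
  ext i j
  fin_cases i <;> fin_cases j <;> simp [Matrix.algebraMap_matrix_apply]

lemma psd_1x1 {p : ℝ} (hp : 0 ≤ p) : (!![(p:ℂ)]).PosSemidef := by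
  refine .of_dotProduct_mulVec_nonneg ?_ ?_
  · ext i j
    fin_cases i <;> fin_cases j <;> simp [Matrix.conjTranspose_apply, Complex.conj_ofReal]
  · intro z
    have hexp : star z ⬝ᵥ ((!![(p:ℂ)]) *ᵥ z) = ((p * ((z 0).re^2 + (z 0).im^2) : ℝ) : ℂ) := by
      refine Complex.ext ?_ ?_ <;>
        · simp [Matrix.mulVec, dotProduct, Fin.sum_univ_one,
            Complex.add_re, Complex.add_im, Complex.mul_re, Complex.mul_im]
          simp only [← Complex.ofReal_pow, Complex.ofReal_re, Complex.ofReal_im]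
          ring
    rw [hexp, Complex.zero_le_real]
    positivity

lemma psd_1x1_entry {p : ℝ} (h : (!![(p:ℂ)]).PosSemidef) : 0 ≤ p := by
  have h2 := h.dotProduct_mulVec_nonneg ![1]
  have hexp : star ![(1:ℂ)] ⬝ᵥ ((!![(p:ℂ)]) *ᵥ ![(1:ℂ)]) = ((p : ℝ) : ℂ) := by
    simp [Matrix.mulVec, dotProduct, Fin.sum_univ_one]
  rw [hexp] at h2
  exact Complex.zero_le_real.mp h2

lemma mono_of_om {F : ℝ → ℝ} (hF : OperatorMonotone F) {x y : ℝ} (hx : 0 ≤ x) (hxy : x ≤ y) :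
    F x ≤ F y := by
  have hdiff : !![(y:ℂ)] - !![(x:ℂ)] = !![(((y - x : ℝ)):ℂ)] := by
    ext i j
    fin_cases i <;> fin_cases j <;> simp
  have h := hF 1 !![(x:ℂ)] !![(y:ℂ)] (psd_1x1 hx) (psd_1x1 (hx.trans hxy))
    (by rw [hdiff]; exact psd_1x1 (by linarith))
  rw [← alg1x1, ← alg1x1, cfc_algebraMap, cfc_algebraMap, ← map_sub, alg1x1] at h
  linarith [psd_1x1_entry h]


lemma whm_of_ne {t x : ℝ} (ht : t ≠ 0) : whm t x = x / ((1-t)*x + t) := by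
  simp [whm, ht]

lemma whm_one (t : ℝ) : whm t 1 = 1 := by
  simp [whm]

lemma whm_zero {t : ℝ} (ht : t ≠ 0) : whm t 0 = 0 := by
  simp [whm, ht]

lemma whm_nonneg {t x : ℝ} (ht0 : 0 ≤ t) (ht1 : t ≤ 1) (hx : 0 ≤ x) : 0 ≤ whm t x := by
  unfold whm
  split
  · norm_num
  · apply div_nonneg hx
    nlinarith

-- u basics
lemma u_facts {μ lam : ℝ} (hμ0 : 0 < μ) (hμ1 : μ < 1) (hlam : 1 < lam) :
    0 < lam*(1-μ)/(lam-μ) ∧ lam*(1-μ)/(lam-μ) < 1 := by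
  have hd : 0 < lam - μ := by linarith
  constructor
  · apply div_pos (by nlinarith) hd
  · rw [div_lt_one hd]
    nlinarith

-- the key saturation identity for whm
lemma whm_det {t μ lam : ℝ} (ht0 : 0 < t) (ht1 : t ≤ 1) (hμ0 : 0 < μ) (hμ1 : μ < 1)
    (hlam : 1 < lam) :
    (whm t lam - lam*(1-μ)/(lam-μ)) * (whm t μ - (1 - lam*(1-μ)/(lam-μ)))
      = (lam*(1-μ)/(lam-μ)) * (1 - lam*(1-μ)/(lam-μ)) := by
  have hd : 0 < lam - μ := by linarith
  have hd1 : 0 < (1-t)*lam + t := by nlinarith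
  have hd2 : 0 < (1-t)*μ + t := by nlinarith
  rw [whm_of_ne ht0.ne', whm_of_ne ht0.ne']
  rw [one_sub_div hd.ne', div_sub_div _ _ hd1.ne' hd.ne', div_sub_div _ _ hd2.ne' hd.ne',
    div_mul_div_comm, div_mul_div_comm, div_eq_div_iff (by positivity) (by positivity)]
  ring

-- also the plain det identity (for B - A psd)
lemma plain_det {μ lam : ℝ} (hμ0 : 0 < μ) (hμ1 : μ < 1) (hlam : 1 < lam) :
    (lam - lam*(1-μ)/(lam-μ)) * (μ - (1 - lam*(1-μ)/(lam-μ)))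
      = (lam*(1-μ)/(lam-μ)) * (1 - lam*(1-μ)/(lam-μ)) := by
  have hd : 0 < lam - μ := by linarith
  field_simp
  ring

lemma pin {a b X Y X' Y' X₀ Y₀ w2 : ℝ} (ha : 0 < a) (hb : 0 < b) (hab : a + b = 1)
    (hX : 0 ≤ X) (hY : 0 ≤ Y) (hX' : 0 ≤ X') (hY' : 0 ≤ Y')
    (h1 : w2 ≤ X*Y) (h2 : w2 ≤ X'*Y')
    (hx0 : a*X + b*X' = X₀) (hy0 : a*Y + b*Y' = Y₀)
    (h3 : X₀*Y₀ = w2) (hw : 0 < w2) :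
    X = X₀ ∧ Y = Y₀ ∧ X' = X₀ ∧ Y' = Y₀ := by
  have hprod : (a*X + b*X')*(a*Y + b*Y') = w2 := by rw [hx0, hy0, h3]
  set P := X*Y' + X'*Y with hP
  have hPnn : 0 ≤ P := by positivity
  have hPsq : 4*w2^2 ≤ P^2 := by nlinarith [sq_nonneg (X*Y' - X'*Y), mul_le_mul h1 h2 hw.le (by nlinarith)]
  have hP2 : 2*w2 ≤ P := by nlinarith
  have e : a^2*(X*Y - w2) + a*b*(P - 2*w2) + b^2*(X'*Y' - w2) = 0 := by
    rw [hP]; linear_combination hprod - w2*(a+b+1)*hab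
  have t1 : 0 ≤ a^2*(X*Y - w2) := mul_nonneg (sq_nonneg a) (by linarith)
  have t2 : 0 ≤ a*b*(P - 2*w2) := mul_nonneg (mul_nonneg ha.le hb.le) (by linarith)
  have t3 : 0 ≤ b^2*(X'*Y' - w2) := mul_nonneg (sq_nonneg b) (by linarith)
  have z1 : a^2*(X*Y - w2) = 0 := by linarith
  have z2 : a*b*(P - 2*w2) = 0 := by linarith
  have z3 : b^2*(X'*Y' - w2) = 0 := by linarith
  have e1 : X*Y = w2 := by
    have := (mul_eq_zero.mp z1).resolve_left (pow_ne_zero 2 ha.ne')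
    linarith
  have e2 : X'*Y' = w2 := by
    have := (mul_eq_zero.mp z3).resolve_left (pow_ne_zero 2 hb.ne')
    linarith
  have e3' : X*Y' + X'*Y = 2*w2 := by
    have := (mul_eq_zero.mp z2).resolve_left (mul_ne_zero ha.ne' hb.ne')
    rw [hP] at this
    linarith
  have hpq : (X*Y')*(X'*Y) = w2^2 := by
    have h' : (X*Y')*(X'*Y) = (X*Y)*(X'*Y') := by ring
    rw [h', e1, e2, sq]
  have hsq : (X*Y' - w2)^2 = 0 := by linear_combination (X*Y')*e3' - hpq
  have hXYp : X*Y' = w2 := by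
    have := pow_eq_zero_iff (n := 2) (by norm_num) |>.mp hsq
    linarith
  have hXpY : X'*Y = w2 := by linarith
  have hXpos : 0 < X := by
    rcases hX.lt_or_eq with h | h
    · exact h
    · exfalso; rw [← h, zero_mul] at e1; linarith
  have hYpos : 0 < Y := by
    rcases hY.lt_or_eq with h | h
    · exact h
    · exfalso; rw [← h, mul_zero] at e1; linarith
  have hYY' : Y = Y' := by
    have : X*Y = X*Y' := by rw [e1, hXYp]
    exact mul_left_cancel₀ hXpos.ne' this
  have hXX' : X = X' := by
    have : X*Y = X'*Y := by rw [e1, hXpY]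
    exact mul_right_cancel₀ hYpos.ne' this
  have c1 : X = X₀ := by
    rw [← hXX'] at hx0
    have h' : (a+b)*X = X₀ := by linear_combination hx0
    rw [hab, one_mul] at h'
    exact h'
  have c2 : Y = Y₀ := by
    rw [← hYY'] at hy0
    have h' : (a+b)*Y = Y₀ := by linear_combination hy0
    rw [hab, one_mul] at h'
    exact h'
  exact ⟨c1, c2, hXX' ▸ c1, hYY' ▸ c2⟩


lemma om_congr {f g : ℝ → ℝ} (h : ∀ x, 0 ≤ x → f x = g x) (hf : OperatorMonotone f) :
    OperatorMonotone g := by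
  intro m A B hA hB hAB
  have e1 : cfc g A = cfc f A :=
    cfc_congr (fun x hx => (h x (spectrum_subset_Ici hA hx)).symm)
  have e2 : cfc g B = cfc f B :=
    cfc_congr (fun x hx => (h x (spectrum_subset_Ici hB hx)).symm)
  rw [e1, e2]
  exact hf m A B hA hB hAB

lemma om_const (c : ℝ) : OperatorMonotone (fun _ => c) := by
  intro m A B hA hB hAB
  have h1 : IsSelfAdjoint A := hA.1
  have h2 : IsSelfAdjoint B := hB.1
  rw [cfc_const c A h1, cfc_const c B h2, sub_self]
  exact Matrix.PosSemidef.zero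

lemma om_id : OperatorMonotone (fun x : ℝ => x) := by
  intro m A B hA hB hAB
  have h1 : IsSelfAdjoint A := hA.1
  have h2 : IsSelfAdjoint B := hB.1
  rw [cfc_id' ℝ A h1, cfc_id' ℝ B h2]
  exact hAB

lemma inv_sub_psd {P Q : Matrix n n ℂ} (hP : P.PosDef) (hQ : Q.PosDef)
    (hQP : (Q - P).PosSemidef) : (P⁻¹ - Q⁻¹).PosSemidef := by
  have hdP : IsUnit P.det := hP.det_pos.ne'.isUnit
  have hdQ : IsUnit Q.det := hQ.det_pos.ne'.isUnit
  set R := Q - P with hR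
  have hRh : Rᴴ = R := hQP.1
  have hQinvh : (Q⁻¹)ᴴ = Q⁻¹ := hQ.inv.isHermitian
  have E1 : Q⁻¹ * R * P⁻¹ = P⁻¹ - Q⁻¹ := by
    rw [hR, Matrix.mul_sub, Matrix.nonsing_inv_mul _ hdQ, Matrix.sub_mul, one_mul,
      Matrix.mul_assoc, Matrix.mul_nonsing_inv _ hdP, Matrix.mul_one]
  have E2 : Q⁻¹ * R * Q⁻¹ + (Q⁻¹ * R) * P⁻¹ * (R * Q⁻¹) = P⁻¹ - Q⁻¹ := by
    have hPR : P + R = Q := by rw [hR]; abel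
    calc Q⁻¹ * R * Q⁻¹ + (Q⁻¹ * R) * P⁻¹ * (R * Q⁻¹)
        = Q⁻¹ * R * (P⁻¹ * P) * Q⁻¹ + (Q⁻¹ * R * P⁻¹) * R * Q⁻¹ := by
          rw [Matrix.nonsing_inv_mul _ hdP]
          noncomm_ring
      _ = (Q⁻¹ * R * P⁻¹) * (P + R) * Q⁻¹ := by noncomm_ring
      _ = Q⁻¹ * R * (P⁻¹ * (Q * Q⁻¹)) := by rw [hPR]; noncomm_ring
      _ = P⁻¹ - Q⁻¹ := by rw [Matrix.mul_nonsing_inv _ hdQ, Matrix.mul_one, E1]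
  rw [← E2]
  have T1 : (Q⁻¹ * R * Q⁻¹).PosSemidef := by
    have := hQP.conjTranspose_mul_mul_same (B := Q⁻¹)
    rwa [hQinvh] at this
  have T2 : ((Q⁻¹ * R) * P⁻¹ * (R * Q⁻¹)).PosSemidef := by
    have := (hP.inv.posSemidef).conjTranspose_mul_mul_same (B := R * Q⁻¹)
    have hch : (R * Q⁻¹)ᴴ = Q⁻¹ * R := by
      rw [Matrix.conjTranspose_mul, hRh, hQinvh]
    rwa [hch] at this
  exact T1.add T2

lemma posdef_alg {t : ℝ} (ht : 0 < t) : (algebraMap ℝ (Matrix n n ℂ) t).PosDef := by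
  rw [Algebra.algebraMap_eq_smul_one]
  refine .of_dotProduct_mulVec_pos ?_ ?_
  · show _ = _
    simp [Matrix.conjTranspose_smul]
  · intro x hx
    rw [Matrix.smul_mulVec, Matrix.one_mulVec, dotProduct_smul,
      Complex.real_smul]
    exact mul_pos (Complex.zero_lt_real.mpr ht) (Matrix.dotProduct_star_self_pos_iff.mpr hx)

lemma mobius_pt (t x : ℝ) (ht1 : t < 1) (hd : 0 < (1-t)*x+t) :
    x / ((1-t)*x + t) = 1/(1-t) + (-(t/(1-t))) * (((1-t)*x+t)⁻¹) := by
  have h1t : (1:ℝ) - t ≠ 0 := by linarith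
  generalize hD : (1-t)*x + t = D at hd ⊢
  have hxD : x = (D - t)/(1-t) := by rw [← hD, eq_div_iff h1t]; ring
  rw [hxD]
  have := hd.ne'
  field_simp
  ring

lemma om_mobius {t : ℝ} (ht0 : 0 < t) (ht1 : t < 1) :
    OperatorMonotone (fun x => x / ((1-t)*x + t)) := by
  set s : ℝ := 1 - t with hs
  have hs0 : 0 < s := by rw [hs]; linarith
  intro m A B hA hB hAB
  -- resolvent continuous on Ici 0
  have hcont : ContinuousOn (fun x : ℝ => (s*x+t)⁻¹) (Set.Ici (0:ℝ)) := by
    apply ContinuousOn.inv₀ (by fun_prop)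
    intro x hx
    have hx0 : (0:ℝ) ≤ x := hx
    positivity
  have formula : ∀ (C : Matrix (Fin m) (Fin m) ℂ), C.PosSemidef →
      cfc (fun x => x / ((1-t)*x + t)) C
        = algebraMap ℝ (Matrix (Fin m) (Fin m) ℂ) (1/s)
          + (-(t/s)) • (s • C + algebraMap ℝ (Matrix (Fin m) (Fin m) ℂ) t)⁻¹
      ∧ (s • C + algebraMap ℝ (Matrix (Fin m) (Fin m) ℂ) t).PosDef := by
    intro C hC
    have hsa : IsSelfAdjoint C := hC.1
    have hspec := spectrum_subset_Ici hC
    have hC' : (s • C + algebraMap ℝ (Matrix (Fin m) (Fin m) ℂ) t).PosDef :=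
      Matrix.PosDef.posSemidef_add (psd_real_smul hs0.le hC) (posdef_alg ht0)
    refine ⟨?_, hC'⟩
    have hres : ContinuousOn (fun x : ℝ => (s*x+t)⁻¹) (spectrum ℝ C) := hcont.mono hspec
    have h1 : cfc (fun x => x / ((1-t)*x + t)) C
        = cfc (fun x : ℝ => 1/s + (-(t/s)) * ((s*x+t)⁻¹)) C := by
      apply cfc_congr
      intro x hx
      have hx0 : 0 ≤ x := hspec hx
      have hd : 0 < s*x+t := by positivity
      rw [hs] at hd ⊢
      exact mobius_pt t x ht1 hd
    have h2 : cfc (fun x : ℝ => 1/s + (-(t/s)) * ((s*x+t)⁻¹)) C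
        = algebraMap ℝ (Matrix (Fin m) (Fin m) ℂ) (1/s)
          + (-(t/s)) • cfc (fun x : ℝ => (s*x+t)⁻¹) C := by
      rw [cfc_const_add _ (fun x => -(t/s) * (s*x+t)⁻¹) _ (continuousOn_const.mul hres) hsa,
        cfc_const_mul _ _ _ hres]
    have haff : s • C + algebraMap ℝ (Matrix (Fin m) (Fin m) ℂ) t
        = cfc (fun x : ℝ => t + s*x) C := by
      rw [cfc_affine hsa t s, add_comm]
    have h3 : cfc (fun x : ℝ => (s*x+t)⁻¹) C
        * (s • C + algebraMap ℝ (Matrix (Fin m) (Fin m) ℂ) t) = 1 := by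
      rw [haff, ← cfc_mul _ _ C hres (by fun_prop)]
      have : cfc (fun x : ℝ => (s*x+t)⁻¹ * (t + s*x)) C = cfc (fun _ : ℝ => (1:ℝ)) C := by
        apply cfc_congr
        intro x hx
        have hx0 : 0 ≤ x := hspec hx
        have hd : 0 < s*x+t := by positivity
        field_simp
        ring
      rw [this, cfc_const 1 C hsa, _root_.map_one]
    have hinv : (s • C + algebraMap ℝ (Matrix (Fin m) (Fin m) ℂ) t)⁻¹
        = cfc (fun x : ℝ => (s*x+t)⁻¹) C := Matrix.inv_eq_left_inv h3
    rw [h1, h2, hinv]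
  obtain ⟨fA, hA'⟩ := formula A hA
  obtain ⟨fB, hB'⟩ := formula B hB
  rw [fA, fB]
  have key : algebraMap ℝ (Matrix (Fin m) (Fin m) ℂ) (1/s)
          + (-(t/s)) • (s • B + algebraMap ℝ (Matrix (Fin m) (Fin m) ℂ) t)⁻¹
      - (algebraMap ℝ (Matrix (Fin m) (Fin m) ℂ) (1/s)
          + (-(t/s)) • (s • A + algebraMap ℝ (Matrix (Fin m) (Fin m) ℂ) t)⁻¹)
      = (t/s) • ((s • A + algebraMap ℝ (Matrix (Fin m) (Fin m) ℂ) t)⁻¹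
          - (s • B + algebraMap ℝ (Matrix (Fin m) (Fin m) ℂ) t)⁻¹) := by
    module
  rw [key]
  apply psd_real_smul (by positivity)
  apply inv_sub_psd hA' hB'
  have hdiff : (s • B + algebraMap ℝ (Matrix (Fin m) (Fin m) ℂ) t)
      - (s • A + algebraMap ℝ (Matrix (Fin m) (Fin m) ℂ) t) = s • (B - A) := by
    module
  rw [hdiff]
  exact psd_real_smul hs0.le hAB


lemma cfc_two_point {F : ℝ → ℝ} {A : Matrix (Fin 2) (Fin 2) ℂ} (hA : IsSelfAdjoint A)
    (α β : ℝ) (hαβ : α ≠ β)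
    (hspec : spectrum ℝ A ⊆ {α, β}) :
    cfc F A = algebraMap ℝ (Matrix (Fin 2) (Fin 2) ℂ) (F β - (F α - F β)/(α - β) * β)
      + ((F α - F β)/(α - β)) • A := by
  have hcongr : cfc F A = cfc (fun x : ℝ =>
      (F β - (F α - F β)/(α - β) * β) + ((F α - F β)/(α - β)) * x) A := by
    apply cfc_congr
    intro x hx
    have hne : α - β ≠ 0 := sub_ne_zero.mpr hαβ
    rcases hspec hx with h | h <;> rw [h] <;> (field_simp; try ring)
  rw [hcongr, cfc_affine hA]

/-- The main 2×2 extraction: an operator monotone `F` with `F 0 = 0`, `F 1 = 1`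
    satisfies the configuration inequalities. -/
lemma alg_affine_2x2 (c₀ c₁ p q r : ℝ) :
    algebraMap ℝ (Matrix (Fin 2) (Fin 2) ℂ) c₀ + c₁ • (!![(p:ℂ), (q:ℂ); (q:ℂ), (r:ℂ)]) =
    !![((c₀ + c₁*p : ℝ):ℂ), ((c₁*q : ℝ):ℂ); ((c₁*q : ℝ):ℂ), ((c₀ + c₁*r : ℝ):ℂ)] := by
  ext i j
  fin_cases i <;> fin_cases j <;>
    simp [Matrix.algebraMap_matrix_apply, Complex.real_smul] <;> push_cast <;> ring

lemma om_matrix_ineq {F : ℝ → ℝ} (hF : OperatorMonotone F) (hF0 : F 0 = 0) (hF1 : F 1 = 1)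
    {μ lam u w : ℝ} (hμ0 : 0 < μ) (hμ1 : μ < 1) (hlam : 1 < lam)
    (hu0 : 0 < u) (hu1 : u < 1) (hw2 : w^2 = u*(1-u))
    (hdet : (lam - u) * (μ - (1-u)) = u*(1-u)) :
    0 ≤ F lam - u ∧ 0 ≤ F μ - (1-u) ∧ u*(1-u) ≤ (F lam - u)*(F μ - (1-u)) := by
  have hμlam : μ < lam := by linarith
  have hlamu : 0 < lam - u := by linarith
  have hμu : 0 ≤ μ - (1-u) := by nlinarith
  have hw2c : (w:ℂ)^2 = (u:ℂ)*(1-(u:ℂ)) := by exact_mod_cast hw2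
  set A : Matrix (Fin 2) (Fin 2) ℂ := !![(u:ℂ), (w:ℂ); (w:ℂ), ((1-u:ℝ):ℂ)] with hAdef
  set B : Matrix (Fin 2) (Fin 2) ℂ := !![((lam:ℝ):ℂ), ((0:ℝ):ℂ); ((0:ℝ):ℂ), ((μ:ℝ):ℂ)] with hBdef
  have hA : A.PosSemidef := psd_of_2x2 hu0.le (by linarith) (by rw [hw2])
  have hB : B.PosSemidef := psd_of_2x2 (by linarith) hμ0.le (by nlinarith)
  have hBA : (B - A).PosSemidef := by
    have hBAeq : B - A = !![((lam - u : ℝ):ℂ), ((-w : ℝ):ℂ); ((-w : ℝ):ℂ), ((μ - (1-u) : ℝ):ℂ)] := by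
      rw [hAdef, hBdef]
      ext i j
      fin_cases i <;> fin_cases j <;> simp <;> push_cast <;> ring
    rw [hBAeq]
    exact psd_of_2x2 hlamu.le hμu (by nlinarith)
  have hkey := hF 2 A B hA hB hBA
  -- spectra
  have hsaA : IsSelfAdjoint A := hA.1
  have hsaB : IsSelfAdjoint B := hB.1
  have hspecA : spectrum ℝ A ⊆ {0, 1} := by
    apply spectrum_subset_pair
    rw [map_zero, sub_zero, _root_.map_one]
    ext i j
    rw [hAdef]
    fin_cases i <;> fin_cases j <;>
      simp [Matrix.mul_apply, Fin.sum_univ_two, Matrix.sub_apply, Matrix.one_apply] <;>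
      push_cast <;> first
        | ring1
        | linear_combination hw2c
        | linear_combination -hw2c
  have hspecB : spectrum ℝ B ⊆ {lam, μ} := by
    apply spectrum_subset_pair
    ext i j
    rw [hBdef]
    fin_cases i <;> fin_cases j <;>
      simp [Matrix.mul_apply, Fin.sum_univ_two, Matrix.sub_apply,
        Matrix.algebraMap_matrix_apply] <;>
      push_cast <;> ring
  have hlamμ : lam - μ ≠ 0 := by linarith
  -- cfc F A = A
  have hcfcA : cfc F A = A := by
    rw [hAdef, cfc_two_point hsaA 0 1 (by norm_num) (hAdef ▸ hspecA), alg_affine_2x2]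
    have k0 : F 1 - (F 0 - F 1)/((0:ℝ) - 1) * 1 = 0 := by rw [hF0, hF1]; norm_num
    have k1 : (F 0 - F 1)/((0:ℝ) - 1) = 1 := by rw [hF0, hF1]; norm_num
    rw [k0, k1]
    norm_num
  -- cfc F B explicit
  have hcfcB : cfc F B = !![((F lam : ℝ):ℂ), ((0:ℝ):ℂ); ((0:ℝ):ℂ), ((F μ : ℝ):ℂ)] := by
    rw [hBdef, cfc_two_point hsaB lam μ (by linarith) (hBdef ▸ hspecB), alg_affine_2x2]
    have k0 : F μ - (F lam - F μ)/(lam - μ) * μ + (F lam - F μ)/(lam - μ) * lam = F lam := by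
      field_simp
      ring
    have k1 : (F lam - F μ)/(lam - μ) * 0 = 0 := by ring
    have k2 : F μ - (F lam - F μ)/(lam - μ) * μ + (F lam - F μ)/(lam - μ) * μ = F μ := by
      ring
    rw [k0, k1, k2]
  rw [hcfcA, hcfcB] at hkey
  have hdiffeq : !![((F lam : ℝ):ℂ), ((0:ℝ):ℂ); ((0:ℝ):ℂ), ((F μ : ℝ):ℂ)] - A
      = !![((F lam - u : ℝ):ℂ), ((-w : ℝ):ℂ); ((-w : ℝ):ℂ), ((F μ - (1-u) : ℝ):ℂ)] := by
    rw [hAdef]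
    ext i j
    fin_cases i <;> fin_cases j <;> simp <;> push_cast <;> ring
  rw [hdiffeq] at hkey
  obtain ⟨e1, e2, e3⟩ := psd_2x2_entries hkey
  refine ⟨e1, e2, ?_⟩
  calc u*(1-u) = (-w)^2 := by rw [neg_pow]; simp [hw2]
    _ ≤ _ := e3


lemma ext_apply (f : Set.Ici (0 : ℝ) → ℝ) {y : ℝ} (hy : 0 ≤ y) :
    ext f y = f ⟨y, hy⟩ := dif_pos hy

lemma both_pin {t : ℝ} (ht0 : 0 < t) (ht1 : t ≤ 1) {F G : ℝ → ℝ}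
    (hFom : OperatorMonotone F) (hGom : OperatorMonotone G)
    (hF0 : F 0 = 0) (hF1 : F 1 = 1) (hG0 : G 0 = 0) (hG1 : G 1 = 1)
    {a b : ℝ} (ha : 0 < a) (hb : 0 < b) (hab : a + b = 1)
    (hcomb : ∀ y, 0 ≤ y → a * F y + b * G y = whm t y)
    {μ lam : ℝ} (hμ0 : 0 < μ) (hμ1 : μ < 1) (hlam : 1 < lam) :
    F lam = whm t lam ∧ F μ = whm t μ ∧ G lam = whm t lam ∧ G μ = whm t μ := by
  set u : ℝ := lam*(1-μ)/(lam-μ) with hu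
  obtain ⟨hu0, hu1⟩ := u_facts hμ0 hμ1 hlam
  have hw2 : (Real.sqrt (u*(1-u)))^2 = u*(1-u) := Real.sq_sqrt (by nlinarith)
  have hdet := plain_det hμ0 hμ1 hlam
  obtain ⟨hX, hY, h1⟩ := om_matrix_ineq hFom hF0 hF1 hμ0 hμ1 hlam hu0 hu1 hw2 hdet
  obtain ⟨hX', hY', h2⟩ := om_matrix_ineq hGom hG0 hG1 hμ0 hμ1 hlam hu0 hu1 hw2 hdet
  have hx0 : a*(F lam - u) + b*(G lam - u) = whm t lam - u := by
    linear_combination (hcomb lam (by linarith)) - u * hab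
  have hy0 : a*(F μ - (1-u)) + b*(G μ - (1-u)) = whm t μ - (1-u) := by
    linear_combination (hcomb μ hμ0.le) - (1-u) * hab
  have h3 : (whm t lam - u)*(whm t μ - (1-u)) = u*(1-u) := whm_det ht0 ht1 hμ0 hμ1 hlam
  have hw : 0 < u*(1-u) := by nlinarith
  obtain ⟨c1, c2, c3, c4⟩ := pin ha hb hab hX hY hX' hY' h1 h2 hx0 hy0 h3 hw
  exact ⟨by linarith, by linarith, by linarith, by linarith⟩

end StmtAux

open StmtAux in
theorem stmt12 (t : ℝ) (ht : t ∈ Set.Icc (0 : ℝ) 1) :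
    (fun x : Set.Ici (0 : ℝ) => whm t (x : ℝ)) ∈ S.extremePoints ℝ := by
  obtain ⟨ht0, ht1⟩ := ht
  have hext : ∀ y : ℝ, 0 ≤ y →
      ext (fun x : Set.Ici (0 : ℝ) => whm t (x : ℝ)) y = whm t y := by
    intro y hy
    rw [ext_apply _ hy]
  -- membership
  have hmem : (fun x : Set.Ici (0 : ℝ) => whm t (x : ℝ)) ∈ S := by
    refine ⟨fun x => whm_nonneg ht0 ht1 x.2, ?_, whm_one t⟩
    rcases eq_or_lt_of_le ht0 with h0 | h0
    · refine om_congr (fun y hy => ?_) (om_const 1)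
      rw [hext y hy, ← h0]
      rcases eq_or_lt_of_le hy with h | h
      · simp [whm, ← h]
      · exact (whm_zero_t h).symm
    · rcases eq_or_lt_of_le ht1 with h1 | h1
      · refine om_congr (fun y hy => ?_) om_id
        rw [hext y hy, whm_of_ne h0.ne', h1]
        norm_num
      · refine om_congr (fun y hy => ?_) (om_mobius h0 h1)
        rw [hext y hy, whm_of_ne h0.ne']
  rw [mem_extremePoints]
  refine ⟨hmem, fun f₁ hf₁ f₂ hf₂ hseg => ?_⟩
  obtain ⟨a, b, ha, hb, hab, hsum⟩ := hseg
  obtain ⟨hf₁nn, hf₁om, hf₁one⟩ := hf₁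
  obtain ⟨hf₂nn, hf₂om, hf₂one⟩ := hf₂
  set F := ext f₁ with hF
  set G := ext f₂ with hG
  have hcomb : ∀ y, 0 ≤ y → a * F y + b * G y = whm t y := by
    intro y hy
    have := congrFun hsum ⟨y, hy⟩
    simp only [Pi.add_apply, Pi.smul_apply, smul_eq_mul] at this
    rw [hF, hG, ext_apply _ hy, ext_apply _ hy]
    exact this
  have hF1 : F 1 = 1 := by rw [hF, ext_apply _ zero_le_one]; exact hf₁one
  have hG1 : G 1 = 1 := by rw [hG, ext_apply _ zero_le_one]; exact hf₂one
  have hFnn : ∀ y, 0 ≤ y → 0 ≤ F y := fun y hy => by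
    rw [hF, ext_apply _ hy]; exact hf₁nn _
  have hGnn : ∀ y, 0 ≤ y → 0 ≤ G y := fun y hy => by
    rw [hG, ext_apply _ hy]; exact hf₂nn _
  -- main claim
  have claim : ∀ y : ℝ, 0 ≤ y → F y = whm t y ∧ G y = whm t y := by
    rcases eq_or_lt_of_le ht0 with h0 | h0
    · -- t = 0 : whm 0 ≡ 1 on [0,∞)
      have hwhm1 : ∀ y : ℝ, 0 ≤ y → whm t y = 1 := by
        intro y hy
        rw [← h0]
        rcases eq_or_lt_of_le hy with h | h
        · simp [whm, ← h]
        · exact whm_zero_t h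
      intro y hy
      have hc := hcomb y hy
      rw [hwhm1 y hy] at hc
      rcases le_total y 1 with hy1 | hy1
      · have m1 : F y ≤ 1 := hF1 ▸ mono_of_om hf₁om hy hy1
        have m2 : G y ≤ 1 := hG1 ▸ mono_of_om hf₂om hy hy1
        constructor <;> rw [hwhm1 y hy] <;> nlinarith
      · have m1 : 1 ≤ F y := hF1 ▸ mono_of_om hf₁om zero_le_one hy1
        have m2 : 1 ≤ G y := hG1 ▸ mono_of_om hf₂om zero_le_one hy1
        constructor <;> rw [hwhm1 y hy] <;> nlinarith
    · -- t > 0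
      have hF0 : F 0 = 0 := by
        have hc := hcomb 0 le_rfl
        rw [whm_zero h0.ne'] at hc
        have n1 := hFnn 0 le_rfl
        have n2 := hGnn 0 le_rfl
        nlinarith
      have hG0 : G 0 = 0 := by
        have hc := hcomb 0 le_rfl
        rw [whm_zero h0.ne'] at hc
        have n1 := hFnn 0 le_rfl
        have n2 := hGnn 0 le_rfl
        nlinarith
      intro y hy
      rcases eq_or_lt_of_le hy with h | hypos
      · rw [← h, whm_zero h0.ne', hF0, hG0]; exact ⟨rfl, rfl⟩
      rcases lt_trichotomy y 1 with hy1 | hy1 | hy1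
      · obtain ⟨_, c2, _, c4⟩ := both_pin h0 ht1 hf₁om hf₂om hF0 hF1 hG0 hG1 ha hb hab hcomb
          hypos hy1 (by norm_num : (1:ℝ) < 2)
        exact ⟨c2, c4⟩
      · rw [hy1, whm_one, hF1, hG1]; exact ⟨rfl, rfl⟩
      · obtain ⟨c1, _, c3, _⟩ := both_pin h0 ht1 hf₁om hf₂om hF0 hF1 hG0 hG1 ha hb hab hcomb
          (by norm_num : (0:ℝ) < 1/2) (by norm_num : (1:ℝ)/2 < 1) hy1
        exact ⟨c1, c3⟩
  constructor <;> funext x <;> obtain ⟨y, hy⟩ := x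
  · have := (claim y hy).1
    rw [hF, ext_apply _ hy] at this
    exact this
  · have := (claim y hy).2
    rw [hG, ext_apply _ hy] at this
    exact this
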